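/- Let G be a finite group, H ≤ G a subgroup, and k ∈ ℕ. Then d_k(G) + 1 ≤ [G : H] · (d_k(H) + 1), where [G : H] is the index of H in G. -/

import Mathlib

/-- `S` is a product-one sequence over `G`: some ordering of its terms multiplies to `1`. -/
def IsProductOne {G : Type*} [Group G] (S : Multiset G) : Prop :=
  ∃ l : List G, (l : Multiset G) = S ∧ l.prod = 1

/-- The set of products `π(S)` of all orderings of the terms of `S`. -/
def piSet {G : Type*} [Group G] (S : Multiset G) : Set G :=
  {g | ∃ l : List G, (l : Multiset G) = S ∧ l.prod = g}

/-- The set `Π(S)` of products of nontrivial subsequences of `S`. -/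
def subseqProds {G : Type*} [Group G] (S : Multiset G) : Set G :=
  {g | ∃ T : Multiset G, T ≤ S ∧ T ≠ 0 ∧ g ∈ piSet T}

/-- `S` is product-one free. -/
def ProductOneFree {G : Type*} [Group G] (S : Multiset G) : Prop :=
  (1 : G) ∉ subseqProds S

/-- `S` is an atom of the monoid `B(G)` of product-one sequences: it is a nontrivial
product-one sequence that is not the concatenation of two nontrivial product-one sequences. -/
def IsPOAtom {G : Type*} [Group G] (S : Multiset G) : Prop :=
  IsProductOne S ∧ S ≠ 0 ∧
    ∀ T₁ T₂ : Multiset G, IsProductOne T₁ → IsProductOne T₂ → T₁ + T₂ = S →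
      T₁ = 0 ∨ T₂ = 0

/-- The large Davenport constant `D(G)`: the supremum of lengths of atoms of `B(G)`. -/
noncomputable def largeD (G : Type*) [Group G] : ℕ :=
  sSup {n : ℕ | ∃ S : Multiset G, IsPOAtom S ∧ Multiset.card S = n}

/-- The small Davenport constant `d(G)`: the supremum of lengths of product-one free
sequences over `G`. -/
noncomputable def smalld (G : Type*) [Group G] : ℕ :=
  sSup {n : ℕ | ∃ S : Multiset G, ProductOneFree S ∧ Multiset.card S = n}
/-- `S` is divisible in `F(G)` by a concatenation of `k` nontrivial product-one sequences. -/
def DividesKProducts {G : Type*} [Group G] (k : ℕ) (S : Multiset G) : Prop :=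
  ∃ f : Fin k → Multiset G,
    (∀ i, f i ≠ 0 ∧ IsProductOne (f i)) ∧ (∑ i, f i) ≤ S

/-- The small `k`-th Davenport constant `d_k(G)`. -/
noncomputable def smalldk (G : Type*) [Group G] (k : ℕ) : ℕ :=
  sSup {n : ℕ | ∃ S : Multiset G, ¬ DividesKProducts k S ∧ Multiset.card S = n}

/-- Every factorization of `S` into nontrivial product-one sequences has at most `k` factors. -/
def MaxFactLe {G : Type*} [Group G] (k : ℕ) (S : Multiset G) : Prop :=
  ∀ (m : ℕ) (f : Fin m → Multiset G),
    (∀ i, f i ≠ 0 ∧ IsProductOne (f i)) → (∑ i, f i) = S → m ≤ k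

/-- The large `k`-th Davenport constant `D_k(G)`. -/
noncomputable def largeDk (G : Type*) [Group G] (k : ℕ) : ℕ :=
  sSup {n : ℕ | ∃ S : Multiset G, IsProductOne S ∧ MaxFactLe k S ∧ Multiset.card S = n}

section Aux
variable {G : Type*} [Group G]

lemma div_mono {k : ℕ} {S S' : Multiset G} (h : DividesKProducts k S) (hle : S ≤ S') :
    DividesKProducts k S' := by
  obtain ⟨f, h1, h2⟩ := h; exact ⟨f, h1, h2.trans hle⟩

lemma extract_one [Finite G] (H : Subgroup G) (S : Multiset G)
    (hS : H.index ≤ Multiset.card S) :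
    ∃ T : Multiset G, T ≤ S ∧ T ≠ 0 ∧ Multiset.card T ≤ H.index ∧
      ∃ g, g ∈ H ∧ g ∈ piSet T := by
  obtain ⟨l, hl⟩ : ∃ l : List G, (l : Multiset G) = S := ⟨S.toList, S.coe_toList⟩
  have hlen : H.index ≤ l.length := by
    rwa [← hl, Multiset.coe_card] at hS
  have := Fintype.ofFinite (G ⧸ H)
  have hcard : Fintype.card (G ⧸ H) < Fintype.card (Fin (H.index + 1)) := by
    have h2 : Fintype.card (G ⧸ H) = H.index := by
      rw [← Nat.card_eq_fintype_card]; rfl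
    simp [h2]
  obtain ⟨i, j, hij, hfe⟩ := Fintype.exists_ne_map_eq_of_card_lt
      (fun i : Fin (H.index + 1) => ((l.take i).prod : G ⧸ H)) hcard
  wlog hlt : (i : ℕ) < (j : ℕ) generalizing i j
  · have hne : (i : ℕ) ≠ (j : ℕ) := fun hc => hij (Fin.ext hc)
    exact this j i hij.symm hfe.symm (by omega)
  set a := (i : ℕ) with ha
  set b := (j : ℕ) with hb
  have hbn : b ≤ H.index := Fin.is_le j
  have hbl : b ≤ l.length := hbn.trans hlen
  have hmem : (l.take a).prod⁻¹ * (l.take b).prod ∈ H := QuotientGroup.eq.mp hfe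
  have htake : l.take b = l.take a ++ (l.drop a).take (b - a) := by
    have h1 : b = a + (b - a) := by omega
    rw [h1, List.take_add]
    simp
  have hprod : ((l.drop a).take (b - a)).prod = (l.take a).prod⁻¹ * (l.take b).prod := by
    rw [htake, List.prod_append]; group
  refine ⟨((l.drop a).take (b - a) : List G), ?_, ?_, ?_, ((l.drop a).take (b - a)).prod,
      hprod ▸ hmem, ⟨(l.drop a).take (b - a), rfl, rfl⟩⟩
  · rw [← hl]
    exact Multiset.coe_le.mpr
      (((List.take_sublist _ _).trans (List.drop_sublist _ _)).subperm)
  · intro h0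
    have hlen0 : ((l.drop a).take (b - a)).length = 0 := by
      rw [← Multiset.coe_card, h0]; simp
    rw [List.length_take, List.length_drop] at hlen0
    omega
  · rw [Multiset.coe_card, List.length_take, List.length_drop]; omega

lemma extract_many [Finite G] (H : Subgroup G) (m : ℕ) : ∀ (S : Multiset G),
    m * H.index ≤ Multiset.card S →
    ∃ (T : Fin m → Multiset G) (g : Fin m → G),
      (∀ i, T i ≠ 0 ∧ g i ∈ H ∧ g i ∈ piSet (T i)) ∧ (∑ i, T i) ≤ S := by
  induction m with
  | zero =>
    intro S _
    exact ⟨Fin.elim0, Fin.elim0, fun i => i.elim0, by simp⟩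
  | succ m ih =>
    intro S hS
    classical
    have h1 : H.index ≤ Multiset.card S :=
      le_trans (Nat.le_mul_of_pos_left _ (Nat.succ_pos m)) hS
    obtain ⟨T₀, hT₀S, hT₀ne, hT₀card, g₀, hg₀H, hg₀pi⟩ := extract_one H S h1
    have h2 : m * H.index ≤ Multiset.card (S - T₀) := by
      rw [Multiset.card_sub hT₀S]
      refine Nat.le_sub_of_add_le ?_
      calc m * H.index + Multiset.card T₀ ≤ m * H.index + H.index :=
            Nat.add_le_add_left hT₀card _
        _ = (m + 1) * H.index := by ring
        _ ≤ Multiset.card S := hS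
    obtain ⟨T', g', hTg', hsum'⟩ := ih (S - T₀) h2
    refine ⟨Fin.cons T₀ T', Fin.cons g₀ g', ?_, ?_⟩
    · intro i
      refine i.cases ?_ ?_
      · simpa using ⟨hT₀ne, hg₀H, hg₀pi⟩
      · intro j; simpa using hTg' j
    · rw [Fin.sum_univ_succ]
      simp only [Fin.cons_zero, Fin.cons_succ]
      calc T₀ + ∑ i : Fin m, T' i ≤ T₀ + (S - T₀) := by
            exact add_le_add_right hsum' _
        _ = S := add_tsub_cancel_of_le hT₀S

lemma map_eq_add_split {α β : Type*} (φ : α → β) : ∀ (a : Multiset β) (u : Multiset α)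
    (b : Multiset β), Multiset.map φ u = a + b →
    ∃ u₁ u₂, u₁ + u₂ = u ∧ Multiset.map φ u₁ = a ∧ Multiset.map φ u₂ = b := by
  intro a
  induction a using Multiset.induction with
  | empty => intro u b h; exact ⟨0, u, by simp, by simp, by simpa using h⟩
  | cons c a' ih =>
    intro u b h
    have hc : c ∈ Multiset.map φ u := by rw [h]; simp
    obtain ⟨x, hxu, hφx⟩ := Multiset.mem_map.mp hc
    obtain ⟨w, rfl⟩ := Multiset.exists_cons_of_mem hxu
    rw [Multiset.map_cons, hφx, Multiset.cons_add] at h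
    have hw : Multiset.map φ w = a' + b := (Multiset.cons_inj_right c).mp h
    obtain ⟨w₁, w₂, hw12, hm1, hm2⟩ := ih w b hw
    exact ⟨x ::ₘ w₁, w₂, by rw [Multiset.cons_add, hw12], by simp [hm1, hφx], hm2⟩

lemma map_eq_sum_split {α β : Type*} (φ : α → β) : ∀ (k : ℕ) (f : Fin k → Multiset β)
    (u : Multiset α), Multiset.map φ u = ∑ j, f j →
    ∃ g : Fin k → Multiset α, (∀ j, Multiset.map φ (g j) = f j) ∧ ∑ j, g j = u := by
  intro k
  induction k with
  | zero =>
    intro f u h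
    have h0 : Multiset.map φ u = 0 := by simpa using h
    have hu : u = 0 := Multiset.map_eq_zero.mp h0
    exact ⟨Fin.elim0, fun j => j.elim0, by simp [hu]⟩
  | succ k ih =>
    intro f u h
    rw [Fin.sum_univ_succ] at h
    obtain ⟨u₁, u₂, hu12, hm1, hm2⟩ := map_eq_add_split φ (f 0) u (∑ i : Fin k, f i.succ) h
    obtain ⟨g', hg', hsum'⟩ := ih (fun i => f i.succ) u₂ hm2
    refine ⟨Fin.cons u₁ g', ?_, ?_⟩
    · intro j
      refine j.cases ?_ ?_
      · simpa using hm1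
      · intro i; simpa using hg' i
    · rw [Fin.sum_univ_succ]
      simpa [hsum'] using hu12

lemma exists_perm_map_eq {α β : Type*} [DecidableEq α] (φ : α → β) : ∀ (lh : List β) (l : List α),
    (l.map φ).Perm lh → ∃ l' : List α, l'.Perm l ∧ l'.map φ = lh := by
  intro lh
  induction lh with
  | nil =>
    intro l h
    have h1 : l.map φ = [] := List.Perm.eq_nil h
    have hl : l = [] := by simpa using h1
    exact ⟨[], by simp [hl], rfl⟩
  | cons b lh' ih =>
    intro l h
    have hb : b ∈ l.map φ := h.mem_iff.mpr (List.mem_cons_self)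
    obtain ⟨x, hxl, hφx⟩ := List.mem_map.mp hb
    have hp : l.Perm (x :: l.erase x) := List.perm_cons_erase hxl
    have h2 : (b :: (l.erase x).map φ).Perm (b :: lh') := by
      have h3 := (hp.map φ).symm.trans h
      simpa [hφx] using h3
    obtain ⟨l'', hperm'', hmap''⟩ := ih (l.erase x) h2.cons_inv
    exact ⟨x :: l'', (hperm''.cons x).trans hp.symm, by simp [hmap'', hφx]⟩

lemma coe_flatten' {α : Type*} : ∀ (L : List (List α)),
    ((L.flatten : List α) : Multiset α)
      = (Multiset.map (fun l : List α => (l : Multiset α)) (L : Multiset (List α))).sum := by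
  intro L
  induction L with
  | nil => simp
  | cons hd tl ih =>
    show ((hd ++ tl.flatten : List α) : Multiset α) = _
    rw [← Multiset.coe_add]
    simp [ih]

lemma lift_div {m k : ℕ} (H : Subgroup G) (T : Fin m → Multiset G) (h : Fin m → H)
    (hT : ∀ i, T i ≠ 0 ∧ ((h i : G) ∈ piSet (T i)))
    (hdiv : DividesKProducts k (Multiset.map h Finset.univ.val)) :
    DividesKProducts k (∑ i, T i) := by
  classical
  obtain ⟨f, hf, hfle⟩ := hdiv
  obtain ⟨R, hR⟩ := Multiset.le_iff_exists_add.mp hfle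
  obtain ⟨u, v, huv, hmu, hmv⟩ := map_eq_add_split h (∑ j, f j) Finset.univ.val R hR
  obtain ⟨g, hg, hgsum⟩ := map_eq_sum_split h k f u hmu
  choose t ht1 ht2 using fun i => (hT i).2
  have psi_sum : ∀ (w₁ w₂ : Multiset (Fin m)),
      ((Multiset.map T (w₁ + w₂)).sum) = (Multiset.map T w₁).sum + (Multiset.map T w₂).sum := by
    intro w₁ w₂; rw [Multiset.map_add, Multiset.sum_add]
  let ψ : Multiset (Fin m) →+ Multiset G :=
    { toFun := fun w => (Multiset.map T w).sum
      map_zero' := by simp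
      map_add' := psi_sum }
  refine ⟨fun j => ψ (g j), fun j => ⟨?_, ?_⟩, ?_⟩
  · -- nonzero
    have hfj : f j ≠ 0 := (hf j).1
    have hgj : g j ≠ 0 := by
      intro h0; apply hfj; rw [← hg j, h0]; simp
    obtain ⟨i, hi⟩ := Multiset.exists_mem_of_ne_zero hgj
    obtain ⟨s, hs⟩ := Multiset.exists_cons_of_mem hi
    obtain ⟨x, hx⟩ := Multiset.exists_mem_of_ne_zero (hT i).1
    have hmemx : x ∈ ψ (g j) := by
      show x ∈ (Multiset.map T (g j)).sum
      rw [hs, Multiset.map_cons, Multiset.sum_cons]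
      exact Multiset.mem_add.mpr (Or.inl hx)
    intro h0
    have h0' : ψ (g j) = 0 := h0
    rw [h0'] at hmemx
    simp at hmemx
  · -- product one
    obtain ⟨lh, hlh, hlhprod⟩ := (hf j).2
    obtain ⟨lj, hlj⟩ : ∃ lj : List (Fin m), (lj : Multiset (Fin m)) = g j :=
      ⟨(g j).toList, (g j).coe_toList⟩
    have hpm : (lj.map h).Perm lh := by
      rw [← Multiset.coe_eq_coe, ← Multiset.map_coe, hlj, hg j, ← hlh]
    obtain ⟨lj', hperm', hmap'⟩ := exists_perm_map_eq h lh lj hpm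
    refine ⟨(lj'.map t).flatten, ?_, ?_⟩
    · rw [coe_flatten', ← Multiset.map_coe, Multiset.map_map]
      have hc : (fun l : List G => (l : Multiset G)) ∘ t = T := by
        funext i; exact ht1 i
      rw [hc]
      show (Multiset.map T (lj' : Multiset (Fin m))).sum = ψ (g j)
      rw [Multiset.coe_eq_coe.mpr hperm', hlj]
      rfl
    · rw [List.prod_flatten, List.map_map]
      have hc : List.prod ∘ t = fun i => ((h i : G)) := by
        funext i; exact ht2 i
      rw [hc]
      have : (lj'.map fun i => ((h i : G))) = lh.map ((↑) : H → G) := by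
        rw [← hmap', List.map_map]; rfl
      rw [this]
      have := map_list_prod H.subtype lh
      simp only [Subgroup.coe_subtype] at this
      rw [← this, hlhprod]
      simp
  · -- sum
    have hψ : ∑ j, ψ (g j) = ψ u := by
      rw [← map_sum ψ g Finset.univ, hgsum]
    rw [hψ]
    have hsplit : ψ u + ψ v = ∑ i, T i := by
      rw [← map_add, huv]
      show (Multiset.map T Finset.univ.val).sum = ∑ i, T i
      rfl
    calc ψ u ≤ ψ u + ψ v := le_add_right (le_refl _)
      _ = ∑ i, T i := hsplit

end Aux

/-- For a subgroup `H` of a finite group `G` and `k ≥ 1`,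
`d_k(G) + 1 ≤ [G : H] · (d_k(H) + 1)`. -/
theorem stmt11 {G : Type*} [Group G] [Finite G] (H : Subgroup G) (k : ℕ) (hk : 1 ≤ k) :
    smalldk G k + 1 ≤ H.index * (smalldk ↥H k + 1) := by
  classical
  have hn0 : H.index ≠ 0 := H.index_ne_zero_of_finite
  have hbddH : BddAbove {c : ℕ | ∃ S : Multiset ↥H, ¬ DividesKProducts k S ∧ Multiset.card S = c} := by
    refine ⟨k * Nat.card ↥H, ?_⟩
    rintro x ⟨S, hndiv, rfl⟩
    by_contra hgt
    push_neg at hgt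
    have hle : k * (⊥ : Subgroup ↥H).index ≤ Multiset.card S := by
      rw [Subgroup.index_bot]; omega
    obtain ⟨T, g, hTg, hsum⟩ := extract_many (⊥ : Subgroup ↥H) k S hle
    refine hndiv ⟨T, fun i => ⟨(hTg i).1, ?_⟩, hsum⟩
    have h1 : g i = 1 := Subgroup.mem_bot.mp (hTg i).2.1
    have h2 := (hTg i).2.2
    rw [h1] at h2
    exact h2
  have key : ∀ S : Multiset G, H.index * (smalldk ↥H k + 1) ≤ Multiset.card S →
      DividesKProducts k S := by
    intro S hS
    have hS' : (smalldk ↥H k + 1) * H.index ≤ Multiset.card S := by rw [mul_comm]; exact hS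
    obtain ⟨T, g, hTg, hsum⟩ := extract_many H (smalldk ↥H k + 1) S hS'
    set h : Fin (smalldk ↥H k + 1) → ↥H := fun i => ⟨g i, (hTg i).2.1⟩ with hh
    have hdivM : DividesKProducts k (Multiset.map h Finset.univ.val) := by
      by_contra hnd
      have hmem : (smalldk ↥H k + 1) ∈
          {c : ℕ | ∃ S : Multiset ↥H, ¬ DividesKProducts k S ∧ Multiset.card S = c} :=
        ⟨Multiset.map h Finset.univ.val, hnd, by simp⟩
      have hle2 : smalldk ↥H k + 1 ≤ smalldk ↥H k := le_csSup hbddH hmem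
      omega
    exact div_mono (lift_div H T h (fun i => ⟨(hTg i).1, (hTg i).2.2⟩) hdivM) hsum
  have hne : (0 : ℕ) ∈ {c : ℕ | ∃ S : Multiset G, ¬ DividesKProducts k S ∧ Multiset.card S = c} := by
    refine ⟨0, ?_, rfl⟩
    rintro ⟨f, hf, hle⟩
    have hi : f ⟨0, hk⟩ ≤ ∑ i, f i :=
      Finset.single_le_sum (fun i _ => zero_le) (Finset.mem_univ _)
    exact (hf ⟨0, hk⟩).1 (Multiset.le_zero.mp (hi.trans hle))
  have hN1 : 1 ≤ H.index * (smalldk ↥H k + 1) := by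
    have := Nat.one_le_iff_ne_zero.mpr hn0
    nlinarith
  have hub : smalldk G k ≤ H.index * (smalldk ↥H k + 1) - 1 := by
    apply csSup_le ⟨0, hne⟩
    rintro x ⟨S, hndiv, rfl⟩
    by_contra hgt
    push_neg at hgt
    exact hndiv (key S (by omega))
  omega
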